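/- For the restricted Kerr metric, on the horizon ellipse S^± = ρ²/(r_±²+a²) + z²/r_±² - 1 = 0 (with r_± satisfying r_±² - 2mr_± + a² = 0), the surface is characteristic: g^{ρρ}(S^±_ρ)² + 2g^{ρz}S^±_ρ S^±_z + g^{zz}(S^±_z)² = 0, where g^{ρρ} = -1 + Kb_ρ², g^{zz} = -1 + Kb_z², g^{ρz} = Kb_ρb_z, K = 2mr³/(r⁴ + a²z²), b_ρ = ρr/(r²+a²) [with r = r_± on the ellipse], b_z = z/r. -/

import Mathlib

/-- For the restricted Kerr metric, on the horizon ellipse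
`ρ²/(r²+a²) + z²/r² = 1` with `r² - 2mr + a² = 0`, the surface is
characteristic: `g^{ρρ}Sρ² + 2g^{ρz}SρSz + g^{zz}Sz² = 0`. -/
theorem stmt14 (m a r ρ z : ℝ) (ha : 0 < a) (ham : a ≤ m) (hrpos : 0 < r)
    (hroot : r^2 - 2*m*r + a^2 = 0)
    (hellipse : ρ^2/(r^2+a^2) + z^2/r^2 = 1)
    (K bρ bz grr gzz grz Sρ Sz : ℝ)
    (hK : K = 2*m*r^3/(r^4 + a^2*z^2))
    (hbρ : bρ = ρ*r/(r^2+a^2)) (hbz : bz = z/r)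
    (hgrr : grr = -1 + K*bρ^2) (hgzz : gzz = -1 + K*bz^2) (hgrz : grz = K*bρ*bz)
    (hSρ : Sρ = 2*ρ/(r^2+a^2)) (hSz : Sz = 2*z/r^2) :
    grr*Sρ^2 + 2*grz*Sρ*Sz + gzz*Sz^2 = 0 := by
  have hr : r ≠ 0 := ne_of_gt hrpos
  have hA : r^2 + a^2 ≠ 0 := by positivity
  have hD : r^4 + a^2*z^2 ≠ 0 := by positivity
  have hm : 2*m*r = r^2 + a^2 := by linarith
  have he : ρ^2*r^2 + z^2*(r^2+a^2) = (r^2+a^2)*r^2 := by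
    field_simp at hellipse; linarith
  have key : ρ^2*r^4 + z^2*(r^2+a^2)^2 = (r^2+a^2)*(r^4+a^2*z^2) := by
    linear_combination r^2*he
  have h1 : bρ*Sρ + bz*Sz = 2*(r^4+a^2*z^2)/((r^2+a^2)*r^3) := by
    rw [hbρ, hbz, hSρ, hSz]
    field_simp
    linear_combination key
  have h2 : Sρ^2 + Sz^2 = 4*(r^4+a^2*z^2)/((r^2+a^2)*r^4) := by
    rw [hSρ, hSz]
    field_simp
    linear_combination 4*key
  have h3 : K = (r^2+a^2)*r^2/(r^4+a^2*z^2) := by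
    rw [hK]
    field_simp
    linear_combination hm
  have main : grr*Sρ^2 + 2*grz*Sρ*Sz + gzz*Sz^2
      = -(Sρ^2 + Sz^2) + K*(bρ*Sρ + bz*Sz)^2 := by
    rw [hgrr, hgzz, hgrz]; ring
  rw [main, h1, h2, h3]
  field_simp
  ring
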